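/- Let 0 ≤ α < 1 and 0 ≤ N < 1 be real numbers with Nα < 1 (which holds automatically). Then ∑_{k=0}^∞ (∑_{i=0}^k N^{k-i} α^i)² = (1/(1-α²)) · ((1+Nα)/(1-Nα)) · (1/(1-N²)). -/

import Mathlib

lemma hasSum_sq_aux (r : ℝ) (hr : |r| < 1) :
    HasSum (fun n : ℕ => ((n : ℝ) + 1) ^ 2 * r ^ n) ((1 + r) / (1 - r) ^ 3) := by
  have hr' : ‖r‖ < 1 := by rwa [Real.norm_eq_abs]
  have h2 := hasSum_choose_mul_geometric_of_norm_lt_one 2 hr'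
  have h1 := hasSum_choose_mul_geometric_of_norm_lt_one 1 hr'
  have h := (h2.mul_left 2).sub h1
  have hne : (1 : ℝ) - r ≠ 0 := by
    intro h0
    have : r = 1 := by linarith
    simp [this] at hr
  convert h using 1 with n
  · rfl
  · funext n
    have hnat : (n + 2).choose 2 = (n + 2) * (n + 1) / 2 := by
      rw [Nat.choose_two_right]
      congr 1
    have hd : 2 ∣ (n + 2) * (n + 1) := by
      simpa [mul_comm] using (Nat.even_mul_succ_self (n + 1)).two_dvd
    have : ((n + 2).choose 2 : ℝ) = ((n : ℝ) + 2) * ((n : ℝ) + 1) / 2 := by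
      rw [hnat, Nat.cast_div hd (by norm_num)]
      push_cast; ring
    simp [this, Nat.choose_one_right]
    ring
  · field_simp
    ring

theorem tsum_inner_sq (N α : ℝ) (hN0 : 0 ≤ N) (hN1 : N < 1) (hα0 : 0 ≤ α) (hα1 : α < 1) :
    ∑' k : ℕ, (∑ i ∈ Finset.range (k + 1), N ^ (k - i) * α ^ i) ^ 2
      = (1 / (1 - α ^ 2)) * ((1 + N * α) / (1 - N * α)) * (1 / (1 - N ^ 2)) := by
  have hα2 : (1 : ℝ) - α ^ 2 ≠ 0 := by nlinarith
  have hN2 : (1 : ℝ) - N ^ 2 ≠ 0 := by nlinarith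
  have hNα1 : N * α < 1 := by nlinarith
  have hNα : (1 : ℝ) - N * α ≠ 0 := by nlinarith
  by_cases hEq : N = α
  · subst hEq
    have h1 : ∀ k : ℕ, (∑ i ∈ Finset.range (k + 1), N ^ (k - i) * N ^ i)
        = ((k : ℝ) + 1) * N ^ k := by
      intro k
      have hc : ∀ i ∈ Finset.range (k + 1), N ^ (k - i) * N ^ i = N ^ k := by
        intro i hi
        rw [← pow_add]
        congr 1
        simp only [Finset.mem_range] at hi
        omega
      rw [Finset.sum_congr rfl hc, Finset.sum_const, Finset.card_range, nsmul_eq_mul]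
      push_cast; ring
    have hlt : |N ^ 2| < 1 := by
      rw [abs_of_nonneg (sq_nonneg N)]; nlinarith
    have hs := hasSum_sq_aux (N ^ 2) hlt
    have hfun : ∀ k : ℕ, (∑ i ∈ Finset.range (k + 1), N ^ (k - i) * N ^ i) ^ 2
        = ((k : ℝ) + 1) ^ 2 * (N ^ 2) ^ k := by
      intro k
      rw [h1 k, mul_pow]
      congr 1
      rw [← pow_mul, ← pow_mul, mul_comm]
    rw [tsum_congr hfun, hs.tsum_eq]
    field_simp
  · have hαN : α - N ≠ 0 := sub_ne_zero.mpr (fun h => hEq h.symm)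
    have hu : ∀ k : ℕ, (∑ i ∈ Finset.range (k + 1), N ^ (k - i) * α ^ i)
        = (α ^ (k + 1) - N ^ (k + 1)) / (α - N) := by
      intro k
      rw [eq_div_iff hαN, ← geom_sum₂_mul α N (k + 1)]
      congr 1
      apply Finset.sum_congr rfl
      intro i hi
      rw [mul_comm]
      congr 1
    have hA : HasSum (fun k : ℕ => (α ^ 2) ^ k) (1 / (1 - α ^ 2)) := by
      simpa [one_div] using hasSum_geometric_of_lt_one (sq_nonneg α) (by nlinarith : α ^ 2 < 1)
    have hM : HasSum (fun k : ℕ => (N * α) ^ k) (1 / (1 - N * α)) := by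
      simpa [one_div] using hasSum_geometric_of_lt_one (mul_nonneg hN0 hα0) hNα1
    have hB : HasSum (fun k : ℕ => (N ^ 2) ^ k) (1 / (1 - N ^ 2)) := by
      simpa [one_div] using hasSum_geometric_of_lt_one (sq_nonneg N) (by nlinarith : N ^ 2 < 1)
    have h := (((hA.mul_left (α ^ 2)).sub (hM.mul_left (2 * (N * α)))).add
      (hB.mul_left (N ^ 2))).mul_left (1 / (α - N) ^ 2)
    have hfun : ∀ k : ℕ, (∑ i ∈ Finset.range (k + 1), N ^ (k - i) * α ^ i) ^ 2
        = 1 / (α - N) ^ 2 * (α ^ 2 * ((α ^ 2) ^ k) - 2 * (N * α) * ((N * α) ^ k)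
            + N ^ 2 * ((N ^ 2) ^ k)) := by
      intro k
      rw [hu k, div_pow]
      field_simp
      ring
    rw [tsum_congr hfun, h.tsum_eq]
    field_simp
    have hNα' : (1:ℝ) - α * N ≠ 0 := by rwa [mul_comm]
    field_simp
    ring
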